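/- Let U be a finite set (universe), and let C be a finite collection of subsets of U, each of size exactly k. Construct, for each S ∈ C, a 'chain' c_S = S, and consider selections C' ⊆ C of pairwise disjoint chains. Then the maximum number of requests that can be admitted, where each of at least |C| identical requests may be assigned to any chain and each element of U has capacity 1 (each element may belong to at most one used chain), equals the maximum cardinality of a collection of pairwise disjoint sets in C. -/

import Mathlib

theorem stmt_10 {U ι : Type*} [DecidableEq U] [Fintype ι] (k : ℕ) (hk : 3 ≤ k)
    (C : Finset (Finset U)) (hC : ∀ S ∈ C, S.card = k)
    (R : Finset ι) (hR : C.card ≤ R.card) :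
    sSup {n : ℕ | ∃ (A : Finset ι) (f : ι → Finset U),
        A ⊆ R ∧ A.card = n ∧ (∀ j ∈ A, f j ∈ C) ∧
        ∀ i ∈ A, ∀ j ∈ A, i ≠ j → Disjoint (f i) (f j)}
      = sSup {n : ℕ | ∃ C' ⊆ C, C'.card = n ∧
          (C' : Set (Finset U)).Pairwise Disjoint} := by
  congr 1
  ext n
  constructor
  · rintro ⟨A, f, hAR, hcard, hfC, hdisj⟩
    refine ⟨A.image f, ?_, ?_, ?_⟩
    · intro S hS
      obtain ⟨i, hi, rfl⟩ := Finset.mem_image.mp hS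
      exact hfC i hi
    · have hinj : Set.InjOn f A := by
        intro i hi j hj hij
        by_contra hne
        have hd := hdisj i hi j hj hne
        rw [hij, disjoint_self] at hd
        have := hC (f j) (hfC j hj)
        rw [hd] at this
        simp at this
        omega
      rw [Finset.card_image_of_injOn hinj, hcard]
    · intro x hx y hy hxy
      simp only [Finset.coe_image, Set.mem_image, Finset.mem_coe] at hx hy
      obtain ⟨i, hi, rfl⟩ := hx
      obtain ⟨j, hj, rfl⟩ := hy
      exact hdisj i hi j hj (fun h => hxy (by rw [h]))
  · rintro ⟨C', hC'C, hcard, hpair⟩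
    have hnR : n ≤ R.card := by
      calc n = C'.card := hcard.symm
        _ ≤ C.card := Finset.card_le_card hC'C
        _ ≤ R.card := hR
    obtain ⟨A, hAR, hA⟩ := Finset.exists_subset_card_eq hnR
    have hcards : A.card = C'.card := by rw [hA, hcard]
    classical
    let e : (A : Finset ι) ≃ (C' : Finset (Finset U)) := Finset.equivOfCardEq hcards
    refine ⟨A, fun i => if h : i ∈ A then (e ⟨i, h⟩ : Finset U) else ∅, hAR, hA, ?_, ?_⟩
    · intro j hj
      simp only [dif_pos hj]
      exact hC'C (e ⟨j, hj⟩).2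
    · intro i hi j hj hij
      simp only [dif_pos hi, dif_pos hj]
      refine hpair (e ⟨i, hi⟩).2 (e ⟨j, hj⟩).2 ?_
      intro h
      have := e.injective (Subtype.ext h)
      exact hij (congrArg Subtype.val this)
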